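/- arXiv:2504.00116 — 2 statements merged into one kernel-verified Lean document; each statement's English description precedes it below -/
import Mathlib

section
/- If integers a, b satisfy 10b² - a² = c > 0 and √c(√10 - 3) ≤ a + b√10 ≤ √c(√10 + 3), then |a| ≤ 3√c and √(c/10) ≤ b ≤ √c. -/
set_option maxHeartbeats 1000000


theorem hyperbola_box (a b c : ℤ) (h : 10 * b^2 - a^2 = c) (hc : 0 < c)
    (h1 : Real.sqrt c * (Real.sqrt 10 - 3) ≤ (a : ℝ) + b * Real.sqrt 10)
    (h2 : (a : ℝ) + b * Real.sqrt 10 ≤ Real.sqrt c * (Real.sqrt 10 + 3)) :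
    (|a| : ℝ) ≤ 3 * Real.sqrt c ∧
    Real.sqrt ((c : ℝ) / 10) ≤ (b : ℝ) ∧ (b : ℝ) ≤ Real.sqrt c := by
  set r := Real.sqrt 10 with hrdef
  set t := Real.sqrt c with htdef
  have hcR : (0 : ℝ) < (c : ℝ) := by exact_mod_cast hc
  have hr2 : r ^ 2 = 10 := Real.sq_sqrt (by norm_num)
  have ht2 : t ^ 2 = (c : ℝ) := Real.sq_sqrt hcR.le
  have hr0 : 0 ≤ r := Real.sqrt_nonneg _
  have hr3 : 3 < r := by nlinarith [hr2, hr0]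
  have ht0 : 0 < t := Real.sqrt_pos.mpr hcR
  have hhR : 10 * (b : ℝ) ^ 2 - (a : ℝ) ^ 2 = (c : ℝ) := by exact_mod_cast h
  set s : ℝ := (a : ℝ) + b * r with hsdef
  have hs0 : 0 < s := lt_of_lt_of_le (by nlinarith) h1
  have hprod : s * ((b : ℝ) * r - a) = t ^ 2 := by
    rw [ht2, ← hhR, hsdef]; ring_nf; nlinarith [hr2]
  have hs'0 : 0 < (b : ℝ) * r - a := by
    by_contra hco
    push_neg at hco
    nlinarith
  have hs'u : (b : ℝ) * r - a ≤ t * (r + 3) := by nlinarith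
  have hs'l : t * (r - 3) ≤ (b : ℝ) * r - a := by nlinarith
  have hba : |(a : ℝ)| ≤ 3 * t := by
    rw [abs_le]; constructor <;> nlinarith
  have habs : (|a| : ℝ) = |(a : ℝ)| := rfl
  have hamge : 2 * t ≤ s + ((b : ℝ) * r - a) := by
    nlinarith [sq_nonneg (s - t)]
  have hb0 : 0 < (b : ℝ) := by nlinarith
  have hbt : (b : ℝ) ≤ t := by
    have e1 : s * (s + ((b : ℝ) * r - a) - 2 * r * t)
        = (s - t * (r - 3)) * (s - t * (r + 3)) := by
      linear_combination hprod - t ^ 2 * hr2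
    have hne : (s - t * (r - 3)) * (s - t * (r + 3)) ≤ 0 :=
      mul_nonpos_of_nonneg_of_nonpos (by linarith) (by linarith)
    have hX : s * (s + ((b : ℝ) * r - a) - 2 * r * t) ≤ s * 0 := by
      rw [mul_zero, e1]; exact hne
    have key := le_of_mul_le_mul_left hX hs0
    have hbr : (b : ℝ) * r ≤ t * r := by
      rw [hsdef] at key; linarith
    exact le_of_mul_le_mul_right hbr (by linarith : (0:ℝ) < r)
  refine ⟨by rw [habs]; exact hba, ?_, hbt⟩
  have h1' : Real.sqrt ((c : ℝ) / 10) ≤ Real.sqrt ((b : ℝ) ^ 2) :=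
    Real.sqrt_le_sqrt (by nlinarith)
  rwa [Real.sqrt_sq hb0.le] at h1'
end

section
/- Let t_k satisfy t_0 = 2, t_1 = 56, t_{k+2} = 38t_{k+1} - t_k. Then t_k ≠ ±10^u for all k ≥ 0 and all integers u ≥ 4. -/
private lemma pow_ten_mod72 : ∀ m : ℕ, (10 : ZMod 72) ^ (4 + m) = 64 := by
  intro m
  induction m with
  | zero => decide
  | succ n ih =>
    have : 4 + (n + 1) = (4 + n) + 1 := by ring
    rw [this, pow_succ, ih]
    decide

private lemma cycle72 (t : ℕ → ℤ)
    (h0 : t 0 = 2) (h1 : t 1 = 56)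
    (hrec : ∀ k, t (k + 2) = 38 * t (k + 1) - t k) :
    ∀ k : ℕ,
      ((t k : ZMod 72) = 2 ∧ (t (k+1) : ZMod 72) = 56) ∨
      ((t k : ZMod 72) = 56 ∧ (t (k+1) : ZMod 72) = 38) ∨
      ((t k : ZMod 72) = 38 ∧ (t (k+1) : ZMod 72) = 20) ∨
      ((t k : ZMod 72) = 20 ∧ (t (k+1) : ZMod 72) = 2) := by
  intro k
  induction k with
  | zero => left; rw [h0, h1]; constructor <;> decide
  | succ n ih =>
    have h2 : (t (n+2) : ZMod 72) = 38 * (t (n+1) : ZMod 72) - (t n : ZMod 72) := by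
      rw [hrec n]; push_cast; ring
    rcases ih with ⟨ha, hb⟩ | ⟨ha, hb⟩ | ⟨ha, hb⟩ | ⟨ha, hb⟩
    · right; left; exact ⟨hb, by rw [h2, ha, hb]; decide⟩
    · right; right; left; exact ⟨hb, by rw [h2, ha, hb]; decide⟩
    · right; right; right; exact ⟨hb, by rw [h2, ha, hb]; decide⟩
    · left; exact ⟨hb, by rw [h2, ha, hb]; decide⟩

theorem t_never_pm_power_of_ten (t : ℕ → ℤ)
    (h0 : t 0 = 2) (h1 : t 1 = 56)
    (hrec : ∀ k, t (k + 2) = 38 * t (k + 1) - t k) :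
    ∀ k : ℕ, ∀ u : ℕ, 4 ≤ u → t k ≠ 10^u ∧ t k ≠ -(10^u) := by
  intro k u hu
  obtain ⟨m, rfl⟩ := Nat.exists_eq_add_of_le hu
  have hc := cycle72 t h0 h1 hrec k
  have hp : ((10 : ℤ)^(4+m) : ZMod 72) = 64 := by
    push_cast
    exact pow_ten_mod72 m
  constructor
  · intro heq
    have : (t k : ZMod 72) = 64 := by rw [heq]; push_cast; exact pow_ten_mod72 m
    rcases hc with ⟨ha, _⟩ | ⟨ha, _⟩ | ⟨ha, _⟩ | ⟨ha, _⟩ <;>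
      rw [ha] at this <;> exact absurd this (by decide)
  · intro heq
    have : (t k : ZMod 72) = -64 := by
      rw [heq]; push_cast; rw [pow_ten_mod72 m]
    rcases hc with ⟨ha, _⟩ | ⟨ha, _⟩ | ⟨ha, _⟩ | ⟨ha, _⟩ <;>
      rw [ha] at this <;> exact absurd this (by decide)
end
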